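/- Let X be a finite-dimensional real vector space with norm ‖·‖ and inner product norm |·|, and 1 ≤ m ≤ dim X − 1. The Busemann–Hausdorff density ψ : G_m(X) → ℝ, defined by 𝓗ᵐ_{‖·‖} ↾ W = ψ(W) · 𝓗ᵐ_{|·|} ↾ W for each m-dimensional subspace W, is continuous for the metric d(W₁,W₂) = ‖π_{W₁} − π_{W₂}‖_{op} on the Grassmannian G_m(X). -/

import Mathlib

open Filter Pointwise MeasureTheory
open scoped ENNReal NNReal

/-- A norm on a real vector space, given as a function. -/
def IsNorm {X : Type*} [AddCommGroup X] [Module ℝ X] (ν : X → ℝ) : Prop :=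
  (∀ x, ν x = 0 ↔ x = 0) ∧ (∀ (c : ℝ) (x : X), ν (c • x) = |c| * ν x) ∧
    ∀ x y, ν (x + y) ≤ ν x + ν y

/-- The diameter of a set with respect to the metric induced by a norm `ν`. -/
noncomputable def nuDiam {X : Type*} [AddCommGroup X] [Module ℝ X] (ν : X → ℝ)
    (s : Set X) : ℝ≥0∞ :=
  ⨆ x ∈ s, ⨆ y ∈ s, ENNReal.ofReal (ν (x - y))

/-- The `m`-dimensional Hausdorff (outer) measure `𝓗ᵐ_ν` associated with a norm `ν`. -/
noncomputable def nuHausdorff {X : Type*} [AddCommGroup X] [Module ℝ X] (ν : X → ℝ)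
    (m : ℕ) (A : Set X) : ℝ≥0∞ :=
  ⨆ (δ : ℝ≥0∞) (_ : 0 < δ),
    ⨅ (t : ℕ → Set X) (_ : A ⊆ ⋃ n, t n) (_ : ∀ n, nuDiam ν (t n) ≤ δ),
      ∑' n, nuDiam ν (t n) ^ m

section Aux

variable {X : Type*} [AddCommGroup X] [Module ℝ X]

lemma IsNorm.zero {ν : X → ℝ} (hν : IsNorm ν) : ν 0 = 0 := (hν.1 0).mpr rfl

lemma IsNorm.neg {ν : X → ℝ} (hν : IsNorm ν) (x : X) : ν (-x) = ν x := by
  simpa using hν.2.1 (-1) x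

lemma IsNorm.nonneg {ν : X → ℝ} (hν : IsNorm ν) (x : X) : 0 ≤ ν x := by
  have h := hν.2.2 x (-x)
  rw [add_neg_cancel, hν.zero, hν.neg] at h
  linarith

lemma IsNorm.sub_comm {ν : X → ℝ} (hν : IsNorm ν) (x y : X) : ν (x - y) = ν (y - x) := by
  rw [← hν.neg (x - y), neg_sub]

lemma IsNorm.sub_le {ν : X → ℝ} (hν : IsNorm ν) (x y : X) : ν x ≤ ν (x - y) + ν y := by
  have := hν.2.2 (x - y) y
  simpa using this

lemma IsNorm.sum_le {ν : X → ℝ} (hν : IsNorm ν) {ι : Type*} (s : Finset ι) (g : ι → X) :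
    ν (∑ i ∈ s, g i) ≤ ∑ i ∈ s, ν (g i) := by
  classical
  induction s using Finset.cons_induction with
  | empty => simp [hν.zero]
  | cons a s ha ih =>
      rw [Finset.sum_cons, Finset.sum_cons]
      exact (hν.2.2 _ _).trans (by linarith)

lemma nuDiam_mono (ν : X → ℝ) {s t : Set X} (h : s ⊆ t) : nuDiam ν s ≤ nuDiam ν t := by
  refine iSup₂_le fun x hx => iSup₂_le fun y hy => ?_
  exact le_iSup₂_of_le x (h hx) (le_iSup₂_of_le y (h hy) le_rfl)

lemma nuDiam_image_le {ν : X → ℝ} (hν : IsNorm ν) {f : X → X} {s : Set X} {L : ℝ}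
    (hL : 0 ≤ L) (hf : ∀ x ∈ s, ∀ y ∈ s, ν (f x - f y) ≤ L * ν (x - y)) :
    nuDiam ν (f '' s) ≤ ENNReal.ofReal L * nuDiam ν s := by
  refine iSup₂_le fun a ha => iSup₂_le fun b hb => ?_
  obtain ⟨x, hx, rfl⟩ := ha
  obtain ⟨y, hy, rfl⟩ := hb
  calc ENNReal.ofReal (ν (f x - f y)) ≤ ENNReal.ofReal (L * ν (x - y)) :=
        ENNReal.ofReal_le_ofReal (hf x hx y hy)
    _ = ENNReal.ofReal L * ENNReal.ofReal (ν (x - y)) := ENNReal.ofReal_mul hL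
    _ ≤ ENNReal.ofReal L * nuDiam ν s := by
        have hle : ENNReal.ofReal (ν (x - y)) ≤ nuDiam ν s :=
          le_iSup₂_of_le x hx (le_iSup₂_of_le y hy le_rfl)
        exact mul_le_mul_right hle _

lemma nuHausdorff_image_le {ν : X → ℝ} (hν : IsNorm ν) (m : ℕ) {f : X → X} {s : Set X}
    {L : ℝ} (hL : 0 < L) (hf : ∀ x ∈ s, ∀ y ∈ s, ν (f x - f y) ≤ L * ν (x - y)) :
    nuHausdorff ν m (f '' s) ≤ ENNReal.ofReal L ^ m * nuHausdorff ν m s := by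
  have hc0 : (ENNReal.ofReal L ^ m : ℝ≥0∞) ≠ 0 :=
    pow_ne_zero _ (ENNReal.ofReal_pos.mpr hL).ne'
  have hct : (ENNReal.ofReal L ^ m : ℝ≥0∞) ≠ ⊤ := ENNReal.pow_ne_top ENNReal.ofReal_ne_top
  refine iSup₂_le fun δ hδ => ?_
  have hδ' : 0 < δ / ENNReal.ofReal L := ENNReal.div_pos hδ.ne' ENNReal.ofReal_ne_top
  have hdiam : ∀ t : Set X, nuDiam ν (f '' (t ∩ s)) ≤ ENNReal.ofReal L * nuDiam ν t := by
    intro t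
    refine (nuDiam_image_le hν hL.le fun x hx y hy => hf x hx.2 y hy.2).trans ?_
    gcongr
    exact nuDiam_mono ν Set.inter_subset_left
  have step : (⨅ (t : ℕ → Set X) (_ : f '' s ⊆ ⋃ n, t n) (_ : ∀ n, nuDiam ν (t n) ≤ δ),
        ∑' n, nuDiam ν (t n) ^ m)
      ≤ ENNReal.ofReal L ^ m * ⨅ (t : ℕ → Set X) (_ : s ⊆ ⋃ n, t n)
          (_ : ∀ n, nuDiam ν (t n) ≤ δ / ENNReal.ofReal L), ∑' n, nuDiam ν (t n) ^ m := by
    rw [ENNReal.mul_iInf_of_ne hc0 hct]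
    refine le_iInf fun t => ?_
    rw [ENNReal.mul_iInf_of_ne hc0 hct]
    refine le_iInf fun h1 => ?_
    rw [ENNReal.mul_iInf_of_ne hc0 hct]
    refine le_iInf fun h2 => ?_
    refine iInf_le_of_le (fun n => f '' (t n ∩ s)) (iInf_le_of_le ?_ (iInf_le_of_le ?_ ?_))
    · rintro _ ⟨x, hx, rfl⟩
      obtain ⟨n, hn⟩ := Set.mem_iUnion.mp (h1 hx)
      exact Set.mem_iUnion.mpr ⟨n, Set.mem_image_of_mem f ⟨hn, hx⟩⟩
    · intro n
      refine (hdiam (t n)).trans ?_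
      calc ENNReal.ofReal L * nuDiam ν (t n) ≤ ENNReal.ofReal L * (δ / ENNReal.ofReal L) := by
            gcongr
            exact h2 n
        _ ≤ δ := ENNReal.mul_div_le
    · calc ∑' n, nuDiam ν (f '' (t n ∩ s)) ^ m
          ≤ ∑' n, (ENNReal.ofReal L * nuDiam ν (t n)) ^ m := by
            refine ENNReal.tsum_le_tsum fun n => ?_
            gcongr
            exact hdiam (t n)
        _ = ENNReal.ofReal L ^ m * ∑' n, nuDiam ν (t n) ^ m := by
            simp_rw [mul_pow]
            exact ENNReal.tsum_mul_left
  refine step.trans ?_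
  gcongr
  exact le_iSup₂_of_le (δ / ENNReal.ofReal L) hδ' le_rfl

end Aux

section NormEquiv

variable {X : Type*} [NormedAddCommGroup X] [NormedSpace ℝ X] [FiniteDimensional ℝ X]

lemma IsNorm.exists_bounds [Nontrivial X] {ν : X → ℝ} (hν : IsNorm ν) :
    ∃ C : ℝ, 1 ≤ C ∧ (∀ x, ν x ≤ C * ‖x‖) ∧ ∀ x, ‖x‖ ≤ C * ν x := by
  classical
  set b := Module.finBasis ℝ X with hb
  set co : Fin (Module.finrank ℝ X) → X →L[ℝ] ℝ :=
    fun i => LinearMap.toContinuousLinearMap (b.coord i) with hco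
  set K : ℝ := ∑ i, ‖co i‖ * ν (b i) with hK
  have hup : ∀ x, ν x ≤ K * ‖x‖ := by
    intro x
    conv_lhs => rw [← b.sum_repr x]
    refine (hν.sum_le _ _).trans ?_
    rw [hK, Finset.sum_mul]
    refine Finset.sum_le_sum fun i _ => ?_
    rw [hν.2.1]
    have h1 : |b.repr x i| ≤ ‖co i‖ * ‖x‖ := by
      have := (co i).le_opNorm x
      simpa [hco, Real.norm_eq_abs] using this
    calc |b.repr x i| * ν (b i) ≤ (‖co i‖ * ‖x‖) * ν (b i) :=
          mul_le_mul_of_nonneg_right h1 (hν.nonneg _)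
      _ = ‖co i‖ * ν (b i) * ‖x‖ := by ring
  have hcont : Continuous ν := by
    have hlip : ∀ x y : X, dist (ν x) (ν y) ≤ K * dist x y := by
      intro x y
      rw [Real.dist_eq, dist_eq_norm]
      have t1 : ν x - ν y ≤ ν (x - y) := by
        have := hν.sub_le x y; linarith
      have t2 : ν y - ν x ≤ ν (x - y) := by
        have := hν.sub_le y x
        rw [hν.sub_comm y x] at this
        linarith
      have h3 : |ν x - ν y| ≤ ν (x - y) := abs_sub_le_iff.mpr ⟨t1, t2⟩
      exact h3.trans (hup (x - y))
    exact (LipschitzWith.of_dist_le' hlip).continuous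
  obtain ⟨z, hz, hzmin⟩ := (isCompact_sphere (0 : X) 1).exists_isMinOn
    (NormedSpace.sphere_nonempty.mpr zero_le_one) hcont.continuousOn
  have hz1 : ‖z‖ = 1 := by simpa using hz
  have hz0 : z ≠ 0 := by
    intro h; rw [h] at hz1; simp at hz1
  have hc1 : 0 < ν z := by
    rcases (hν.nonneg z).lt_or_eq with h | h
    · exact h
    · exact absurd ((hν.1 z).mp h.symm) hz0
  have hlow : ∀ x, ‖x‖ ≤ (1 / ν z) * ν x := by
    intro x
    rcases eq_or_ne x 0 with rfl | hx
    · simp [hν.zero]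
    have hxn : (0:ℝ) < ‖x‖ := norm_pos_iff.mpr hx
    have hmem : ‖x‖⁻¹ • x ∈ Metric.sphere (0 : X) 1 := by
      simp [norm_smul, abs_of_pos (inv_pos.mpr hxn), inv_mul_cancel₀ hxn.ne']
    have h1 : ν z ≤ ν (‖x‖⁻¹ • x) := hzmin hmem
    rw [hν.2.1, abs_of_pos (inv_pos.mpr hxn)] at h1
    rw [div_mul_eq_mul_div, le_div_iff₀ hc1]
    calc ‖x‖ * ν z ≤ ‖x‖ * (‖x‖⁻¹ * ν x) := by
          exact mul_le_mul_of_nonneg_left h1 hxn.le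
      _ = ν x := by field_simp
      _ = 1 * ν x := (one_mul _).symm
  refine ⟨max (max K (1 / ν z)) 1, le_max_right _ _, fun x => ?_, fun x => ?_⟩
  · exact (hup x).trans (mul_le_mul_of_nonneg_right
      ((le_max_left _ _).trans (le_max_left _ _)) (norm_nonneg x))
  · exact (hlow x).trans (mul_le_mul_of_nonneg_right
      ((le_max_right _ _).trans (le_max_left _ _)) (hν.nonneg x))

end NormEquiv

section KeyLemma

set_option maxHeartbeats 4000000

lemma psi_le_aux {X : Type*} [NormedAddCommGroup X] [InnerProductSpace ℝ X]
    [FiniteDimensional ℝ X] [MeasurableSpace X] [BorelSpace X]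
    {ν : X → ℝ} (hν : IsNorm ν) {m : ℕ}
    {ψ : Submodule ℝ X → ℝ}
    (hψ : ∀ W : Submodule ℝ X, Module.finrank ℝ W = m →
      0 < ψ W ∧ ∀ A : Set X, A ⊆ (W : Set X) → MeasurableSet A →
        nuHausdorff ν m A = ENNReal.ofReal (ψ W) * μH[(m : ℝ)] A)
    {C : ℝ} (hC : 1 ≤ C) (hub : ∀ x, ν x ≤ C * ‖x‖) (hlb : ∀ x, ‖x‖ ≤ C * ν x)
    (W W' : Submodule ℝ X) (hW : Module.finrank ℝ W = m) (hW' : Module.finrank ℝ W' = m)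
    {ε : ℝ}
    (hε : ‖W'.subtypeL.comp (Submodule.orthogonalProjectionOnto W') -
      W.subtypeL.comp (Submodule.orthogonalProjectionOnto W)‖ ≤ ε)
    (hε1 : ε < 1) :
    ψ W' ≤ (1 + C ^ 2 * ε) ^ m * (1 / (1 - ε)) ^ m * ψ W := by
  classical
  have hε0 : 0 ≤ ε := (norm_nonneg _).trans hε
  have hC0 : 0 < C := lt_of_lt_of_le one_pos hC
  set P : X →L[ℝ] X := W.subtypeL.comp (Submodule.orthogonalProjectionOnto W) with hP
  set P' : X →L[ℝ] X := W'.subtypeL.comp (Submodule.orthogonalProjectionOnto W') with hP'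
  have hPid : ∀ x ∈ W, P x = x := fun x hx => Submodule.starProjection_eq_self_iff.mpr hx
  have hdiff : ∀ z : X, ‖P' z - P z‖ ≤ ε * ‖z‖ := by
    intro z
    have h1 : ‖(P' - P) z‖ ≤ ‖P' - P‖ * ‖z‖ := (P' - P).le_opNorm z
    rw [ContinuousLinearMap.sub_apply] at h1
    exact h1.trans (mul_le_mul_of_nonneg_right hε (norm_nonneg z))
  -- the reference set A inside W
  have hfr : Module.finrank ℝ (Fin m → ℝ) = Module.finrank ℝ W := by
    rw [Module.finrank_fin_fun, hW]
  set g : (Fin m → ℝ) ≃ₗ[ℝ] W := LinearEquiv.ofFinrankEq _ _ hfr with hg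
  set h : (Fin m → ℝ) →L[ℝ] X :=
    W.subtypeL.comp (LinearMap.toContinuousLinearMap g.toLinearMap) with hh
  have hhapp : ∀ z, h z = ((g z : W) : X) := fun z => by
    simp [hh]
  set pmap : X →L[ℝ] (Fin m → ℝ) :=
    (LinearMap.toContinuousLinearMap g.symm.toLinearMap).comp (Submodule.orthogonalProjectionOnto W) with hpm
  have hph : ∀ z, pmap (h z) = z := by
    intro z
    have h1 : Submodule.orthogonalProjectionOnto W ((g z : W) : X) = g z :=
      Submodule.orthogonalProjectionOnto_mem_subspace_eq_self (g z)
    rw [hhapp]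
    simp only [hpm, ContinuousLinearMap.comp_apply, LinearMap.coe_toContinuousLinearMap',
      LinearEquiv.coe_coe, h1, g.symm_apply_apply]
  set A : Set X := h '' Metric.closedBall 0 1 with hA
  have hAW : A ⊆ (W : Set X) := by
    rintro _ ⟨z, -, rfl⟩
    exact (g z).2
  have hAc : IsCompact A := (isCompact_closedBall _ _).image h.continuous
  have hAm : MeasurableSet A := hAc.isClosed.measurableSet
  have hpi : (μH[(m : ℝ)] : Measure (Fin m → ℝ)) = volume := by
    have := MeasureTheory.hausdorffMeasure_pi_real (ι := Fin m)
    simpa using this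
  have hm0 : (0 : ℝ) ≤ (m : ℝ) := Nat.cast_nonneg m
  have hAtop : μH[(m : ℝ)] A ≠ ⊤ := by
    have h1 := h.lipschitz.hausdorffMeasure_image_le hm0 (Metric.closedBall 0 1)
    rw [hpi] at h1
    exact ne_top_of_le_ne_top (ENNReal.mul_ne_top
      (ENNReal.rpow_ne_top_of_nonneg hm0 ENNReal.coe_ne_top)
      measure_closedBall_lt_top.ne) h1
  have hA0 : μH[(m : ℝ)] A ≠ 0 := by
    have himg : pmap '' A = Metric.closedBall 0 1 := by
      rw [hA, ← Set.image_comp]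
      have : pmap ∘ h = id := funext hph
      rw [this, Set.image_id]
    have h1 := pmap.lipschitz.hausdorffMeasure_image_le hm0 A
    rw [himg, hpi] at h1
    intro h0
    rw [h0, mul_zero] at h1
    exact (Metric.measure_closedBall_pos volume (0 : Fin m → ℝ) one_pos).ne'
      (le_antisymm h1 (by positivity))
  -- the linear equivalence e : W ≃ W'
  set φ : W →ₗ[ℝ] W' := (Submodule.orthogonalProjectionOnto W').toLinearMap.comp W.subtype with hφdef
  have hφ : ∀ w : W, ((φ w : W') : X) = P' (w : X) := fun w => by
    simp [hφdef, hP']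
  have hφinj : Function.Injective φ := by
    rw [← LinearMap.ker_eq_bot]
    refine (Submodule.eq_bot_iff _).mpr fun w hw => ?_
    rw [LinearMap.mem_ker] at hw
    have h1 : P' (w : X) = 0 := by rw [← hφ w, hw]; simp
    have h2 : ‖(w : X)‖ ≤ ε * ‖(w : X)‖ := by
      have h3 : ‖(w : X)‖ = ‖P' (w : X) - P (w : X)‖ := by
        rw [h1, hPid _ w.2]
        simp
      calc ‖(w : X)‖ = ‖P' (w : X) - P (w : X)‖ := h3
        _ ≤ ε * ‖(w : X)‖ := hdiff _
    have h4 : ‖(w : X)‖ = 0 := by nlinarith [norm_nonneg (w : X)]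
    have : (w : X) = 0 := norm_eq_zero.mp h4
    exact Subtype.ext this
  set e : W ≃ₗ[ℝ] W' := LinearMap.linearEquivOfInjective φ hφinj (by rw [hW, hW']) with he
  have heapp : ∀ w : W, e w = φ w := fun w =>
    LinearMap.linearEquivOfInjective_apply hφinj (by rw [hW, hW']) w
  set v : X →L[ℝ] X :=
    W.subtypeL.comp ((LinearMap.toContinuousLinearMap e.symm.toLinearMap).comp
      (Submodule.orthogonalProjectionOnto W')) with hv
  set u : X →L[ℝ] X := P'.comp P with hudef
  have hu : ∀ x ∈ W, u x = P' x := by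
    intro x hx
    have : u x = P' (P x) := by simp [hudef]
    rw [this, hPid x hx]
  have hvu : ∀ x ∈ W, v (u x) = x := by
    intro x hx
    rw [hu x hx]
    have h1 : Submodule.orthogonalProjectionOnto W' (P' x) = Submodule.orthogonalProjectionOnto W' x :=
      Submodule.orthogonalProjectionOnto_mem_subspace_eq_self (Submodule.orthogonalProjectionOnto W' x)
    have h0 : v (P' x) = ((e.symm (Submodule.orthogonalProjectionOnto W' (P' x)) : W) : X) := by
      simp [hv]
    rw [h0, h1]
    have h2 : Submodule.orthogonalProjectionOnto W' x = e ⟨x, hx⟩ := by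
      rw [heapp]
      apply Subtype.ext
      rw [hφ ⟨x, hx⟩]
      rfl
    rw [h2, e.symm_apply_apply]
  set B : Set X := u '' A with hB
  have hBW' : B ⊆ (W' : Set X) := by
    rintro _ ⟨x, -, rfl⟩
    exact (Submodule.orthogonalProjectionOnto W' (P x)).2
  have hBm : MeasurableSet B := ((hAc.image u.continuous).isClosed).measurableSet
  have hvB : v '' B = A := by
    rw [hB, ← Set.image_comp]
    have h1 : (v ∘ u) '' A = id '' A := Set.image_congr fun x hx => hvu x (hAW hx)
    rw [h1, Set.image_id]
  -- Lipschitz estimates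
  have ha1 : (1 : ℝ) ≤ 1 + C ^ 2 * ε := by nlinarith
  have ha0 : (0 : ℝ) < 1 + C ^ 2 * ε := lt_of_lt_of_le one_pos ha1
  have hb0 : (0 : ℝ) < 1 / (1 - ε) := by
    have h1e : (0 : ℝ) < 1 - ε := by linarith
    positivity
  have hun : ∀ x ∈ A, ∀ y ∈ A, ν (u x - u y) ≤ (1 + C ^ 2 * ε) * ν (x - y) := by
    intro x hx y hy
    have hz : x - y ∈ W := sub_mem (hAW hx) (hAW hy)
    have h1 : u x - u y = P' (x - y) := by rw [← map_sub]; exact hu _ hz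
    rw [h1]
    have h2 : ν (P' (x - y)) ≤ ν (P' (x - y) - (x - y)) + ν (x - y) := hν.sub_le _ _
    have h3 : ν (P' (x - y) - (x - y)) ≤ C * ‖P' (x - y) - (x - y)‖ := hub _
    have h4 : ‖P' (x - y) - (x - y)‖ ≤ ε * ‖x - y‖ := by
      have := hdiff (x - y)
      rwa [hPid _ hz] at this
    have h5 : ‖x - y‖ ≤ C * ν (x - y) := hlb _
    nlinarith [hν.nonneg (x - y), norm_nonneg (x - y)]
  have hvlip : LipschitzOnWith (1 / (1 - ε)).toNNReal v B := by
    refine LipschitzOnWith.of_dist_le' fun p hp q hq => ?_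
    obtain ⟨x, hx, rfl⟩ := hp
    obtain ⟨y, hy, rfl⟩ := hq
    rw [hvu x (hAW hx), hvu y (hAW hy)]
    have hz : x - y ∈ W := sub_mem (hAW hx) (hAW hy)
    have h1 : u x - u y = P' (x - y) := by rw [← map_sub]; exact hu _ hz
    rw [dist_eq_norm, dist_eq_norm, h1]
    have h4 : ‖P' (x - y) - (x - y)‖ ≤ ε * ‖x - y‖ := by
      have := hdiff (x - y)
      rwa [hPid _ hz] at this
    have h5 : ‖x - y‖ ≤ ‖P' (x - y)‖ + ‖P' (x - y) - (x - y)‖ := by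
      have := norm_sub_le (P' (x - y)) (P' (x - y) - (x - y))
      simpa using this
    have h6 : (1 - ε) * ‖x - y‖ ≤ ‖P' (x - y)‖ := by nlinarith [norm_nonneg (x - y)]
    rw [div_mul_eq_mul_div, le_div_iff₀ (by linarith : (0:ℝ) < 1 - ε)]
    nlinarith [norm_nonneg (P' (x - y))]
  -- measure comparison
  have eqA : nuHausdorff ν m A = ENNReal.ofReal (ψ W) * μH[(m : ℝ)] A :=
    (hψ W hW).2 A hAW hAm
  have eqB : nuHausdorff ν m B = ENNReal.ofReal (ψ W') * μH[(m : ℝ)] B :=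
    (hψ W' hW').2 B hBW' hBm
  have m1 : nuHausdorff ν m B ≤ ENNReal.ofReal (1 + C ^ 2 * ε) ^ m * nuHausdorff ν m A :=
    nuHausdorff_image_le hν m ha0 hun
  have m2 : μH[(m : ℝ)] A ≤ ENNReal.ofReal (1 / (1 - ε)) ^ m * μH[(m : ℝ)] B := by
    have h1 := hvlip.hausdorffMeasure_image_le hm0
    rw [hvB] at h1
    refine h1.trans ?_
    have h2 : (((1 / (1 - ε)).toNNReal : ℝ≥0∞)) ^ (m : ℝ)
        = ENNReal.ofReal (1 / (1 - ε)) ^ m := by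
      rw [← ENNReal.rpow_natCast (ENNReal.ofReal (1 / (1 - ε))) m]
      rfl
    rw [h2]
  have m3 : μH[(m : ℝ)] B ≤ ((‖u‖₊ : ℝ≥0∞)) ^ (m : ℝ) * μH[(m : ℝ)] A :=
    u.lipschitz.hausdorffMeasure_image_le hm0 A
  have hBtop : μH[(m : ℝ)] B ≠ ⊤ :=
    ne_top_of_le_ne_top (ENNReal.mul_ne_top
      (ENNReal.rpow_ne_top_of_nonneg hm0 ENNReal.coe_ne_top) hAtop) m3
  have hB0 : μH[(m : ℝ)] B ≠ 0 := by
    intro h0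
    rw [h0, mul_zero] at m2
    exact hA0 (le_antisymm m2 (by positivity))
  have hψWnn : 0 ≤ ψ W := (hψ W hW).1.le
  have chain : ENNReal.ofReal (ψ W') * μH[(m : ℝ)] B
      ≤ ENNReal.ofReal ((1 + C ^ 2 * ε) ^ m * (1 / (1 - ε)) ^ m * ψ W) * μH[(m : ℝ)] B := by
    calc ENNReal.ofReal (ψ W') * μH[(m : ℝ)] B = nuHausdorff ν m B := eqB.symm
      _ ≤ ENNReal.ofReal (1 + C ^ 2 * ε) ^ m * nuHausdorff ν m A := m1
      _ = ENNReal.ofReal (1 + C ^ 2 * ε) ^ m * (ENNReal.ofReal (ψ W) * μH[(m : ℝ)] A) := by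
          rw [eqA]
      _ ≤ ENNReal.ofReal (1 + C ^ 2 * ε) ^ m *
          (ENNReal.ofReal (ψ W) * (ENNReal.ofReal (1 / (1 - ε)) ^ m * μH[(m : ℝ)] B)) := by
          gcongr
      _ = (ENNReal.ofReal (1 + C ^ 2 * ε) ^ m * ENNReal.ofReal (1 / (1 - ε)) ^ m *
          ENNReal.ofReal (ψ W)) * μH[(m : ℝ)] B := by ring
      _ = ENNReal.ofReal ((1 + C ^ 2 * ε) ^ m * (1 / (1 - ε)) ^ m * ψ W) * μH[(m : ℝ)] B := by
          rw [ENNReal.ofReal_mul (by positivity), ENNReal.ofReal_mul (by positivity),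
            ENNReal.ofReal_pow ha0.le, ENNReal.ofReal_pow hb0.le]
  have hfinal := (ENNReal.mul_le_mul_iff_left hB0 hBtop).mp chain
  exact (ENNReal.ofReal_le_ofReal_iff (by positivity)).mp hfinal

end KeyLemma

/-- The Busemann–Hausdorff density `ψ` is continuous on the Grassmannian of
`m`-dimensional subspaces, with the metric `d(W₁,W₂) = ‖π_{W₁} − π_{W₂}‖_op`
(sequential continuity). -/
theorem stmt9 {X : Type*} [NormedAddCommGroup X] [InnerProductSpace ℝ X]
    [FiniteDimensional ℝ X] [MeasurableSpace X] [BorelSpace X]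
    (ν : X → ℝ) (hν : IsNorm ν) (m : ℕ) (hm : 1 ≤ m) (hm' : m ≤ Module.finrank ℝ X - 1)
    (ψ : Submodule ℝ X → ℝ)
    (hψ : ∀ W : Submodule ℝ X, Module.finrank ℝ W = m →
      0 < ψ W ∧ ∀ A : Set X, A ⊆ (W : Set X) → MeasurableSet A →
        nuHausdorff ν m A = ENNReal.ofReal (ψ W) * μH[(m : ℝ)] A) :
    ∀ (W : Submodule ℝ X) (Ws : ℕ → Submodule ℝ X),
      Module.finrank ℝ W = m → (∀ k, Module.finrank ℝ (Ws k) = m) →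
      Tendsto
        (fun k => ‖(Ws k).subtypeL.comp ((Ws k).orthogonalProjectionOnto) -
          W.subtypeL.comp (W.orthogonalProjectionOnto)‖) atTop (nhds 0) →
      Tendsto (fun k => ψ (Ws k)) atTop (nhds (ψ W)) := by
  intro W Ws hW hWs htend
  have hpos : 0 < Module.finrank ℝ X := by
    have h1 : 0 < Module.finrank ℝ W := by omega
    exact lt_of_lt_of_le h1 (Submodule.finrank_le W)
  haveI : Nontrivial X := Module.nontrivial_of_finrank_pos hpos
  obtain ⟨C, hC1, hub, hlb⟩ := hν.exists_bounds
  set εf : ℕ → ℝ := fun k => ‖(Ws k).subtypeL.comp ((Ws k).orthogonalProjectionOnto) -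
    W.subtypeL.comp (W.orthogonalProjectionOnto)‖ with hεf
  have hεnn : ∀ k, 0 ≤ εf k := fun k => norm_nonneg _
  set G : ℕ → ℝ := fun k => (1 + C ^ 2 * εf k) ^ m * (1 / (1 - εf k)) ^ m with hG
  have hev1 : ∀ᶠ k in atTop, εf k < 1 := htend.eventually_lt_const one_pos
  have hGpos : ∀ k, εf k < 1 → 0 < G k := by
    intro k hk
    have h1 : (0:ℝ) < 1 + C ^ 2 * εf k := by nlinarith [hεnn k, sq_nonneg C]
    have h2 : (0:ℝ) < 1 / (1 - εf k) := by
      have : (0:ℝ) < 1 - εf k := by linarith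
      positivity
    positivity
  have hupper : ∀ᶠ k in atTop, ψ (Ws k) ≤ G k * ψ W := by
    refine hev1.mono fun k hk => ?_
    exact psi_le_aux hν hψ hC1 hub hlb W (Ws k) hW (hWs k) le_rfl hk
  have hlower : ∀ᶠ k in atTop, ψ W / G k ≤ ψ (Ws k) := by
    refine hev1.mono fun k hk => ?_
    have h1 : ψ W ≤ G k * ψ (Ws k) := by
      refine psi_le_aux hν hψ hC1 hub hlb (Ws k) W (hWs k) hW ?_ hk
      rw [norm_sub_rev]
    rw [div_le_iff₀ (hGpos k hk)]
    linarith [mul_comm (G k) (ψ (Ws k))]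
  have t1 : Tendsto (fun k => 1 + C ^ 2 * εf k) atTop (nhds 1) := by
    have := tendsto_const_nhds (x := (1:ℝ)) (f := atTop (α := ℕ)) |>.add (htend.const_mul (C ^ 2))
    simpa using this
  have t2 : Tendsto (fun k => 1 - εf k) atTop (nhds 1) := by
    have := tendsto_const_nhds (x := (1:ℝ)) (f := atTop (α := ℕ)) |>.sub htend
    simpa using this
  have t3 : Tendsto (fun k => 1 / (1 - εf k)) atTop (nhds 1) := by
    have := t2.inv₀ one_ne_zero
    simpa [one_div] using this
  have hGt : Tendsto G atTop (nhds 1) := by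
    have := (t1.pow m).mul (t3.pow m)
    simpa [hG, one_div] using this
  have hup : Tendsto (fun k => G k * ψ W) atTop (nhds (ψ W)) := by
    have := hGt.mul_const (ψ W)
    simpa only [one_mul] using this
  have hlo : Tendsto (fun k => ψ W / G k) atTop (nhds (ψ W)) := by
    have := (tendsto_const_nhds (x := ψ W) (f := atTop (α := ℕ))).div hGt one_ne_zero
    simpa only [div_one, Pi.div_def] using this
  exact tendsto_of_tendsto_of_tendsto_of_le_of_le' hlo hup hlower hupper
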